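/- arXiv:1704.07686 — 2 statements merged into one kernel-verified Lean document; each statement's English description precedes it below -/
import Mathlib

section
/- For all real numbers γ3, γ4 and b2, the first-order Melnikov integral along the heteroclinic loop of the Z2-equivariant cusp normal form (with a2 = 1) evaluates, for both choices of sign, as: ∫_{0}^{±√2} [ 2(1−y²)(γ4·y² + γ3·y + b2·y³)/√(4−2y²) − (1/2)·y·√(4−2y²)·(γ4·y + γ3 + b2·y²) ] dy = −( ±(3√2π/8)·γ4 + (32/15)·b2 + (4/3)·γ3 ); equivalently, ∫_{√2}^{0} (same integrand) dy = (3√2π/8)·γ4 + (32/15)·b2 + (4/3)·γ3 and ∫_{−√2}^{0} (same integrand) dy = −(3√2π/8)·γ4 + (32/15)·b2 + (4/3)·γ3. -/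
open MeasureTheory Set intervalIntegral

/-- The Melnikov integrand. -/
noncomputable def melInt (γ3 γ4 b2 y : ℝ) : ℝ :=
  2 * (1 - y ^ 2) * (γ4 * y ^ 2 + γ3 * y + b2 * y ^ 3) / Real.sqrt (4 - 2 * y ^ 2)
    - (1 / 2) * y * Real.sqrt (4 - 2 * y ^ 2) * (γ4 * y + γ3 + b2 * y ^ 2)

lemma key_integrable (γ3 γ4 b2 : ℝ) :
    IntervalIntegrable (melInt γ3 γ4 b2) volume 0 (Real.sqrt 2) := by
  have h2 : (Real.sqrt 2) ^ 2 = 2 := Real.sq_sqrt (by norm_num)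
  have h2le : Real.sqrt 2 ≤ 2 := by nlinarith [Real.sqrt_nonneg 2]
  have h2ge : (1:ℝ) ≤ Real.sqrt 2 := by nlinarith [Real.sqrt_nonneg 2]
  unfold melInt
  apply IntervalIntegrable.sub
  · -- singular part, compare with C * (√2 - y)^(-1/2)
    set C : ℝ := 2 * (2 * |γ4| + 2 * |γ3| + 3 * |b2|) with hCdef
    have hC0 : 0 ≤ C := by positivity
    have hg : IntervalIntegrable (fun y => C * (Real.sqrt 2 - y) ^ (-(1/2) : ℝ))
        volume 0 (Real.sqrt 2) := by
      have h1 : IntervalIntegrable (fun x : ℝ => x ^ (-(1/2) : ℝ)) volume 0 (Real.sqrt 2) :=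
        intervalIntegral.intervalIntegrable_rpow' (by norm_num)
      have h3 := (h1.comp_sub_left (Real.sqrt 2)).symm
      simpa using h3.const_mul C
    apply hg.mono_fun'
    · apply Measurable.aestronglyMeasurable
      apply Measurable.div <;> fun_prop
    · rw [Filter.EventuallyLE, ae_restrict_iff' measurableSet_uIoc]
      apply Filter.Eventually.of_forall
      intro x hx
      rw [Set.uIoc_of_le (Real.sqrt_nonneg 2)] at hx
      obtain ⟨hx0, hx2⟩ := hx
      have hxx : x ^ 2 ≤ 2 := by nlinarith
      have hnum : |2 * (1 - x ^ 2) * (γ4 * x ^ 2 + γ3 * x + b2 * x ^ 3)| ≤ C := by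
        have h1 : |1 - x ^ 2| ≤ 1 := abs_le.mpr ⟨by nlinarith, by nlinarith⟩
        have h2' : |γ4 * x ^ 2 + γ3 * x + b2 * x ^ 3| ≤ 2 * |γ4| + 2 * |γ3| + 3 * |b2| := by
          have t1 : |γ4 * x ^ 2| ≤ 2 * |γ4| := by
            rw [abs_mul, abs_of_nonneg (by positivity : (0:ℝ) ≤ x ^ 2)]
            nlinarith [abs_nonneg γ4]
          have t2 : |γ3 * x| ≤ 2 * |γ3| := by
            rw [abs_mul, abs_of_nonneg hx0.le]
            nlinarith [abs_nonneg γ3]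
          have t3 : |b2 * x ^ 3| ≤ 3 * |b2| := by
            rw [abs_mul, abs_of_nonneg (by positivity : (0:ℝ) ≤ x ^ 3)]
            have hx3 : x ^ 3 ≤ 3 := by nlinarith
            nlinarith [abs_nonneg b2]
          calc |γ4 * x ^ 2 + γ3 * x + b2 * x ^ 3|
              ≤ |γ4 * x ^ 2 + γ3 * x| + |b2 * x ^ 3| := abs_add_le _ _
            _ ≤ |γ4 * x ^ 2| + |γ3 * x| + |b2 * x ^ 3| := by
                have := abs_add_le (γ4 * x ^ 2) (γ3 * x); linarith
            _ ≤ 2 * |γ4| + 2 * |γ3| + 3 * |b2| := by linarith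
        calc |2 * (1 - x ^ 2) * (γ4 * x ^ 2 + γ3 * x + b2 * x ^ 3)|
            = 2 * |1 - x ^ 2| * |γ4 * x ^ 2 + γ3 * x + b2 * x ^ 3| := by
              rw [abs_mul, abs_mul, abs_of_nonneg (by norm_num : (0:ℝ) ≤ 2)]
          _ ≤ C := by
              rw [hCdef]
              nlinarith [abs_nonneg (1 - x ^ 2), abs_nonneg (γ4 * x ^ 2 + γ3 * x + b2 * x ^ 3)]
      have hrpow : (Real.sqrt 2 - x) ^ (-(1/2) : ℝ) = (Real.sqrt (Real.sqrt 2 - x))⁻¹ := by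
        rw [Real.rpow_neg (by linarith), ← Real.sqrt_eq_rpow]
      simp only [Real.norm_eq_abs, abs_div, hrpow]
      rw [abs_of_nonneg (Real.sqrt_nonneg (4 - 2 * x ^ 2))]
      have hssle : Real.sqrt (Real.sqrt 2 - x) ≤ Real.sqrt (4 - 2 * x ^ 2) := by
        apply Real.sqrt_le_sqrt
        nlinarith [mul_nonneg (sub_nonneg.mpr hx2)
          (by nlinarith : (0:ℝ) ≤ 2 * Real.sqrt 2 + 2 * x - 1)]
      rcases lt_or_eq_of_le hx2 with hlt | heq
      · have hspos : 0 < Real.sqrt (Real.sqrt 2 - x) := Real.sqrt_pos.mpr (by linarith)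
        rw [div_le_iff₀ (lt_of_lt_of_le hspos hssle)]
        calc |2 * (1 - x ^ 2) * (γ4 * x ^ 2 + γ3 * x + b2 * x ^ 3)| ≤ C := hnum
          _ = (C * (Real.sqrt (Real.sqrt 2 - x))⁻¹) * Real.sqrt (Real.sqrt 2 - x) := by
              field_simp
          _ ≤ _ := by
              apply mul_le_mul_of_nonneg_left hssle
              positivity
      · subst heq
        have h0 : Real.sqrt (4 - 2 * Real.sqrt 2 ^ 2) = 0 := by rw [h2]; norm_num
        rw [h0]
        simp
  · apply Continuous.intervalIntegrable
    fun_prop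

lemma key_eval (γ3 γ4 b2 : ℝ) :
    (∫ y in (0:ℝ)..(Real.sqrt 2), melInt γ3 γ4 b2 y)
      = -((3 * Real.sqrt 2 * Real.pi / 8) * γ4 + (32 / 15) * b2 + (4 / 3) * γ3) := by
  have h2 : (Real.sqrt 2) ^ 2 = 2 := Real.sq_sqrt (by norm_num)
  have h2pos : 0 < Real.sqrt 2 := Real.sqrt_pos.mpr (by norm_num)
  set F : ℝ → ℝ := fun y =>
    γ4 * (Real.sqrt (4 - 2 * y ^ 2) * (y ^ 3 / 8 + 3 * y / 8)
        - 3 * Real.sqrt 2 / 4 * Real.arcsin (y / Real.sqrt 2))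
    + γ3 * (Real.sqrt (4 - 2 * y ^ 2) * (y ^ 2 / 6 + 2 / 3))
    + b2 * (Real.sqrt (4 - 2 * y ^ 2) * (y ^ 4 / 10 + 4 * y ^ 2 / 15 + 16 / 15)) with hF
  have hcont : ContinuousOn F (Icc 0 (Real.sqrt 2)) := by
    apply Continuous.continuousOn
    rw [hF]
    have hsq : Continuous fun y : ℝ => Real.sqrt (4 - 2 * y ^ 2) :=
      Real.continuous_sqrt.comp (by continuity)
    have harc : Continuous fun y : ℝ => Real.arcsin (y / Real.sqrt 2) :=
      Real.continuous_arcsin.comp (by continuity)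
    continuity
  have hderiv : ∀ y ∈ Ioo (0:ℝ) (Real.sqrt 2),
      HasDerivWithinAt F (melInt γ3 γ4 b2 y) (Ioi y) y := by
    intro y hy
    obtain ⟨hy0, hy2⟩ := hy
    have hyy : y ^ 2 < 2 := by nlinarith
    have hpos : 0 < 4 - 2 * y ^ 2 := by nlinarith
    set s := Real.sqrt (4 - 2 * y ^ 2) with hsdef
    have hs2 : s ^ 2 = 4 - 2 * y ^ 2 := Real.sq_sqrt hpos.le
    have hspos : 0 < s := Real.sqrt_pos.mpr hpos
    have hinner : HasDerivAt (fun y : ℝ => 4 - 2 * y ^ 2) (-(4 * y)) y := by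
      have h := ((hasDerivAt_pow 2 y).const_mul (2:ℝ)).const_sub 4
      refine h.congr_deriv ?_
      push_cast; ring
    have hsqrt : HasDerivAt (fun y : ℝ => Real.sqrt (4 - 2 * y ^ 2)) (-(2 * y) / s) y := by
      have h := (Real.hasDerivAt_sqrt (ne_of_gt hpos)).comp y hinner
      refine h.congr_deriv ?_
      field_simp
      ring
    have hx1 : y / Real.sqrt 2 ≠ -1 := by
      have : 0 < y / Real.sqrt 2 := by positivity
      linarith
    have hx2 : y / Real.sqrt 2 ≠ 1 := by
      have : y / Real.sqrt 2 < 1 := (div_lt_one h2pos).mpr hy2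
      linarith
    have hsub : Real.sqrt (1 - (y / Real.sqrt 2) ^ 2) = s / 2 := by
      rw [div_pow, h2, show 1 - y ^ 2 / 2 = (4 - 2 * y ^ 2) * (1/4) by ring,
        Real.sqrt_mul hpos.le, show (1/4:ℝ) = (1/2)^2 by norm_num,
        Real.sqrt_sq (by norm_num : (0:ℝ) ≤ 1/2)]
      ring
    have harc : HasDerivAt (fun y : ℝ => Real.arcsin (y / Real.sqrt 2))
        (1 / (s / 2) * (1 / Real.sqrt 2)) y := by
      have h1 : HasDerivAt (fun y : ℝ => y / Real.sqrt 2) (1 / Real.sqrt 2) y := by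
        simpa using (hasDerivAt_id y).div_const (Real.sqrt 2)
      have h := (Real.hasDerivAt_arcsin hx1 hx2).comp y h1
      rw [hsub] at h
      exact h
    have hp1 : HasDerivAt (fun x : ℝ => x ^ 3 / 8 + 3 * x / 8) (3 * y ^ 2 / 8 + 3 / 8) y := by
      have h := ((hasDerivAt_pow 3 y).div_const 8).add
        (((hasDerivAt_id y).const_mul 3).div_const 8)
      refine h.congr_deriv ?_
      push_cast; ring
    have hp2 : HasDerivAt (fun x : ℝ => x ^ 2 / 6 + 2 / 3) (2 * y / 6) y := by
      have h := ((hasDerivAt_pow 2 y).div_const 6).add_const (2/3 : ℝ)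
      refine h.congr_deriv ?_
      push_cast; ring
    have hp3 : HasDerivAt (fun x : ℝ => x ^ 4 / 10 + 4 * x ^ 2 / 15 + 16 / 15)
        (4 * y ^ 3 / 10 + 8 * y / 15) y := by
      have h := (((hasDerivAt_pow 4 y).div_const 10).add
        (((hasDerivAt_pow 2 y).const_mul 4).div_const 15)).add_const (16/15 : ℝ)
      refine h.congr_deriv ?_
      push_cast; ring
    have hFderiv : HasDerivAt F
        (γ4 * ((-(2 * y) / s) * (y ^ 3 / 8 + 3 * y / 8) + s * (3 * y ^ 2 / 8 + 3 / 8)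
            - 3 * Real.sqrt 2 / 4 * (1 / (s / 2) * (1 / Real.sqrt 2)))
          + γ3 * ((-(2 * y) / s) * (y ^ 2 / 6 + 2 / 3) + s * (2 * y / 6))
          + b2 * ((-(2 * y) / s) * (y ^ 4 / 10 + 4 * y ^ 2 / 15 + 16 / 15)
            + s * (4 * y ^ 3 / 10 + 8 * y / 15))) y := by
      have h := ((((hsqrt.mul hp1).sub (harc.const_mul (3 * Real.sqrt 2 / 4))).const_mul γ4).add
        ((hsqrt.mul hp2).const_mul γ3)).add ((hsqrt.mul hp3).const_mul b2)
      exact h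
    have heq : (γ4 * ((-(2 * y) / s) * (y ^ 3 / 8 + 3 * y / 8) + s * (3 * y ^ 2 / 8 + 3 / 8)
            - 3 * Real.sqrt 2 / 4 * (1 / (s / 2) * (1 / Real.sqrt 2)))
          + γ3 * ((-(2 * y) / s) * (y ^ 2 / 6 + 2 / 3) + s * (2 * y / 6))
          + b2 * ((-(2 * y) / s) * (y ^ 4 / 10 + 4 * y ^ 2 / 15 + 16 / 15)
            + s * (4 * y ^ 3 / 10 + 8 * y / 15))) = melInt γ3 γ4 b2 y := by
      unfold melInt
      rw [← hsdef]
      have harcv : 3 * Real.sqrt 2 / 4 * (1 / (s / 2) * (1 / Real.sqrt 2)) = 3 / (2 * s) := by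
        rw [div_div_eq_mul_div, one_mul]
        field_simp
        ring
      rw [harcv]
      have h4 : s ^ 4 = (4 - 2 * y ^ 2) ^ 2 := by rw [← hs2]; ring
      have h6 : s ^ 6 = (4 - 2 * y ^ 2) ^ 3 := by rw [← hs2]; ring
      field_simp
      ring_nf
      rw [hs2]
      ring
    rw [← heq]
    exact hFderiv.hasDerivWithinAt
  have hFTC := intervalIntegral.integral_eq_sub_of_hasDeriv_right_of_le h2pos.le hcont hderiv
    (key_integrable γ3 γ4 b2)
  rw [hFTC, hF]
  have e1 : Real.sqrt (4 - 2 * Real.sqrt 2 ^ 2) = 0 := by rw [h2]; norm_num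
  have e2 : Real.arcsin (Real.sqrt 2 / Real.sqrt 2) = Real.pi / 2 := by
    rw [div_self (ne_of_gt h2pos), Real.arcsin_one]
  have e3 : Real.sqrt (4 - 2 * (0:ℝ) ^ 2) = 2 := by
    norm_num
  simp only [e1, e2, e3]
  norm_num [Real.arcsin_zero]
  ring

lemma melInt_neg (γ3 γ4 b2 x : ℝ) : melInt γ3 γ4 b2 (-x) = melInt (-γ3) γ4 (-b2) x := by
  unfold melInt
  rw [show 4 - 2 * (-x) ^ 2 = 4 - 2 * x ^ 2 by ring]
  ring

/-- First-order Melnikov integrals along the heteroclinic loop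
(`Z₂`-equivariant case `r = s = 2`, `a₂ = 1`), for both choices of sign. -/
theorem stmt14 (γ3 γ4 b2 : ℝ) :
    (∫ y in (Real.sqrt 2)..(0 : ℝ),
        (2 * (1 - y ^ 2) * (γ4 * y ^ 2 + γ3 * y + b2 * y ^ 3) / Real.sqrt (4 - 2 * y ^ 2)
          - (1 / 2) * y * Real.sqrt (4 - 2 * y ^ 2) * (γ4 * y + γ3 + b2 * y ^ 2)))
      = (3 * Real.sqrt 2 * Real.pi / 8) * γ4 + (32 / 15) * b2 + (4 / 3) * γ3 ∧
    (∫ y in (-Real.sqrt 2)..(0 : ℝ),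
        (2 * (1 - y ^ 2) * (γ4 * y ^ 2 + γ3 * y + b2 * y ^ 3) / Real.sqrt (4 - 2 * y ^ 2)
          - (1 / 2) * y * Real.sqrt (4 - 2 * y ^ 2) * (γ4 * y + γ3 + b2 * y ^ 2)))
      = -(3 * Real.sqrt 2 * Real.pi / 8) * γ4 + (32 / 15) * b2 + (4 / 3) * γ3 := by
  constructor
  · rw [intervalIntegral.integral_symm]
    have h := key_eval γ3 γ4 b2
    unfold melInt at h
    rw [h]
    ring
  · have h1 : (∫ y in (-Real.sqrt 2)..(0 : ℝ),
        (2 * (1 - y ^ 2) * (γ4 * y ^ 2 + γ3 * y + b2 * y ^ 3) / Real.sqrt (4 - 2 * y ^ 2)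
          - (1 / 2) * y * Real.sqrt (4 - 2 * y ^ 2) * (γ4 * y + γ3 + b2 * y ^ 2)))
        = ∫ x in (0:ℝ)..(Real.sqrt 2), melInt γ3 γ4 b2 (-x) := by
      rw [intervalIntegral.integral_comp_neg (melInt γ3 γ4 b2)]
      unfold melInt
      norm_num
    rw [h1]
    have h2 : (∫ x in (0:ℝ)..(Real.sqrt 2), melInt γ3 γ4 b2 (-x))
        = ∫ x in (0:ℝ)..(Real.sqrt 2), melInt (-γ3) γ4 (-b2) x := by
      apply intervalIntegral.integral_congr
      intro x _
      exact melInt_neg γ3 γ4 b2 x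
    rw [h2, key_eval]
    ring
end

section
/- Let a2, b2, ν2, ν3 be real numbers with b2 ≠ 0, let D := a2² + 4·a2·b2·ν3 − 4·b2²·ν2, and assume D ≥ 0 and −a2 − 2·b2·ν3 + √D ≥ 0. Define y₊ := (√2/(2b2))·√(−a2 − 2b2ν3 + √D), y₋ := −y₊, and x± := ν3·y± + b2·y±³. Then both points E₊ = (x₊, y₊) and E₋ = (x₋, y₋) are equilibria of the Z2-equivariant system ẋ = ν2·y + ν3·x + a2·y³ + b2·x·y², ẏ = −x + ν3·y + b2·y³; that is, ν2·y± + ν3·x± + a2·y±³ + b2·x±·y±² = 0 and −x± + ν3·y± + b2·y±³ = 0. -/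
/-- The points `E₊` and `E₋` are equilibria of the `Z₂`-equivariant normal form system. -/
theorem stmt15 (a2 b2 ν2 ν3 : ℝ) (hb : b2 ≠ 0)
    (hD : 0 ≤ a2 ^ 2 + 4 * a2 * b2 * ν3 - 4 * b2 ^ 2 * ν2)
    (hpos : 0 ≤ -a2 - 2 * b2 * ν3 +
        Real.sqrt (a2 ^ 2 + 4 * a2 * b2 * ν3 - 4 * b2 ^ 2 * ν2)) :
    ∀ y : ℝ,
      (y = (Real.sqrt 2 / (2 * b2)) *
            Real.sqrt (-a2 - 2 * b2 * ν3 +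
              Real.sqrt (a2 ^ 2 + 4 * a2 * b2 * ν3 - 4 * b2 ^ 2 * ν2)) ∨
       y = -((Real.sqrt 2 / (2 * b2)) *
            Real.sqrt (-a2 - 2 * b2 * ν3 +
              Real.sqrt (a2 ^ 2 + 4 * a2 * b2 * ν3 - 4 * b2 ^ 2 * ν2)))) →
      ∀ x : ℝ, x = ν3 * y + b2 * y ^ 3 →
        ν2 * y + ν3 * x + a2 * y ^ 3 + b2 * x * y ^ 2 = 0 ∧
        -x + ν3 * y + b2 * y ^ 3 = 0 := by
  intro y hy x hx
  set s := Real.sqrt (a2 ^ 2 + 4 * a2 * b2 * ν3 - 4 * b2 ^ 2 * ν2) with hs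
  have hs2 : s ^ 2 = a2 ^ 2 + 4 * a2 * b2 * ν3 - 4 * b2 ^ 2 * ν2 := Real.sq_sqrt hD
  have ht : (Real.sqrt (-a2 - 2 * b2 * ν3 + s)) ^ 2 = -a2 - 2 * b2 * ν3 + s :=
    Real.sq_sqrt hpos
  have h2 : (Real.sqrt 2) ^ 2 = 2 := Real.sq_sqrt (by norm_num)
  have hy2 : y ^ 2 = (-a2 - 2 * b2 * ν3 + s) / (2 * b2 ^ 2) := by
    rcases hy with h | h <;> rw [h] <;> field_simp <;> ring_nf <;>
      rw [h2, Real.sq_sqrt (by linarith : (0:ℝ) ≤ -a2 - b2 * ν3 * 2 + s)] <;> ring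
  have key : ν2 + ν3 ^ 2 + (a2 + 2 * b2 * ν3) * y ^ 2 + b2 ^ 2 * (y ^ 2) ^ 2 = 0 := by
    rw [hy2]
    field_simp
    nlinarith [hs2]
  subst hx
  constructor
  · linear_combination y * key
  · ring
end
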